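/- arXiv:1901.00963 — 11 statements merged into one kernel-verified Lean document; each statement's English description precedes it below -/
import Mathlib

section
/- Let f : ℕ × ℕ × {0,1} → ℝ be a nonnegative function belonging to the class ℱ. Then for all x ≥ 1 and all q₁ ∈ ℕ, 2·f(x,q₁,1) ≤ f(x+1,q₁,1) + f(x−1,q₁,1) (i.e., f(·,q₁,1) is convex in its first argument). -/
/-- The class ℱ of functions `f : ℕ × ℕ × {0,1} → ℝ` (with `l₂ : Fin 2`)
satisfying the nine properties (F1)–(F9) together with nonnegativity. -/
structure InClassF (f : ℕ → ℕ → Fin 2 → ℝ) : Prop where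
  nonneg : ∀ x q₁ l₂, 0 ≤ f x q₁ l₂
  F1 : ∀ x q₁, f (x+1) q₁ 0 + f (x+1) q₁ 1 ≤ f x q₁ 1 + f (x+2) q₁ 0
  F2 : ∀ x q₁, f (x+1) q₁ 0 + f x (q₁+1) 1 ≤ f x q₁ 1 + f (x+1) (q₁+1) 0
  F3 : ∀ q₁, f 0 (q₁+1) 0 + f 0 (q₁+1) 1 ≤ f 0 q₁ 1 + f 0 (q₁+2) 0
  F4 : ∀ x q₁ l₂, f x (q₁+1) l₂ ≤ f (x+1) q₁ l₂
  F5 : ∀ x q₁, f x q₁ 1 + f (x+1) q₁ 0 ≤ f x q₁ 0 + f (x+1) q₁ 1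
  F6 : ∀ x q₁, f x q₁ 1 + f x (q₁+1) 0 ≤ f x q₁ 0 + f x (q₁+1) 1
  F7 : ∀ x q₁ l₂, f x q₁ l₂ ≤ f (x+1) q₁ l₂
  F8 : ∀ x q₁ l₂, f x q₁ l₂ ≤ f x (q₁+1) l₂
  F9 : ∀ x q₁, f x q₁ 0 ≤ f x q₁ 1

theorem stmt_0 (f : ℕ → ℕ → Fin 2 → ℝ) (hf : InClassF f) :
    ∀ x q₁ : ℕ, 1 ≤ x → 2 * f x q₁ 1 ≤ f (x + 1) q₁ 1 + f (x - 1) q₁ 1 := by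
  intro x q₁ hx
  obtain ⟨y, rfl⟩ := Nat.exists_eq_add_of_le hx
  have h1 := hf.F1 y q₁
  have h5 := hf.F5 (y+1) q₁
  simp only [Nat.add_sub_cancel_left] at *
  have : 1 + y = y + 1 := by ring
  rw [this]
  have e : y + 1 + 1 = y + 2 := rfl
  rw [e]
  linarith
end

section
/- Let f : ℕ × ℕ × {0,1} → ℝ be a nonnegative function belonging to the class ℱ. Then for all q₁ ≥ 1, 2·f(0,q₁,1) ≤ f(1,q₁,1) + f(0,q₁−1,1). -/
theorem stmt_1 (f : ℕ → ℕ → Fin 2 → ℝ) (hf : InClassF f) :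
    ∀ q₁ : ℕ, 1 ≤ q₁ → 2 * f 0 q₁ 1 ≤ f 1 q₁ 1 + f 0 (q₁ - 1) 1 := by
  rintro q₁ hq
  obtain ⟨q, rfl⟩ := Nat.exists_eq_add_of_le hq
  simp only [Nat.add_sub_cancel_left, Nat.add_comm 1 q]
  have h2 := hf.F2 0 q
  have h5 := hf.F5 0 (q+1)
  have h4 := hf.F4 0 q (0 : Fin 2)
  simp only [zero_add, Nat.add_sub_cancel] at h2 h5 h4 ⊢
  linarith
end

section
/- Let f : ℕ × ℕ × {0,1} → ℝ be a nonnegative function belonging to the class ℱ. Then for all q₁ ≥ 1, 2·f(0,q₁,1) ≤ f(0,q₁+1,1) + f(0,q₁−1,1) (i.e., f(0,·,1) is convex in its second argument). -/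
theorem stmt_2 (f : ℕ → ℕ → Fin 2 → ℝ) (hf : InClassF f) :
    ∀ q₁ : ℕ, 1 ≤ q₁ → 2 * f 0 q₁ 1 ≤ f 0 (q₁ + 1) 1 + f 0 (q₁ - 1) 1 := by
  rintro (_|q') hq
  · omega
  · have h3 := hf.F3 q'
    have h6 := hf.F6 0 (q'+1)
    simp only [Nat.succ_sub_one]
    linarith
end

section
/- Let f : ℕ × ℕ × {0,1} → ℝ be a nonnegative function belonging to the class ℱ. Then for all x, q₁ ∈ ℕ, 2·f(x+1,q₁,0) ≤ f(x+2,q₁,0) + f(x,q₁,0) (i.e., f(·,q₁,0) is convex in its first argument). -/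
theorem stmt_3 (f : ℕ → ℕ → Fin 2 → ℝ) (hf : InClassF f) :
    ∀ x q₁ : ℕ, 2 * f (x + 1) q₁ 0 ≤ f (x + 2) q₁ 0 + f x q₁ 0 := by
  intro x q₁
  have h1 := hf.F1 x q₁
  have h5 := hf.F5 x q₁
  linarith
end

section
/- Let f : ℕ × ℕ × {0,1} → ℝ be a nonnegative function belonging to the class ℱ. Then for all x, q₁ ∈ ℕ, f(x+1,q₁,0) + f(x,q₁+1,0) ≤ f(x+1,q₁+1,0) + f(x,q₁,0) (submodularity of f(·,·,0) in its first two arguments). -/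
theorem stmt_7 (f : ℕ → ℕ → Fin 2 → ℝ) (hf : InClassF f) :
    ∀ x q₁ : ℕ, f (x + 1) q₁ 0 + f x (q₁ + 1) 0 ≤ f (x + 1) (q₁ + 1) 0 + f x q₁ 0 := by
  intro x q₁
  have h2 := hf.F2 x q₁
  have h6 := hf.F6 x q₁
  linarith
end

section
/- Let J : ℕ × ℕ × {0,1} → ℝ be a nonnegative function belonging to the class ℱ, and let T be the intermediate-value function obtained from J. Then T satisfies property (F4): for all x, q₁ ∈ ℕ and l₂ ∈ {0,1}, T(x,q₁+1,l₂) ≤ T(x+1,q₁,l₂). -/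
/-- The intermediate-value function `T` obtained from `J`:
`T(x,q₁,1) = J(x,q₁,1)`, `T(0,0,0) = J(0,0,0)`,
`T(x,q₁,0) = min{J(x,q₁,0), J(x−1,q₁,1)}` for `x ≥ 1`, and
`T(0,q₁,0) = min{J(0,q₁,0), J(0,q₁−1,1)}` for `q₁ ≥ 1`. -/
noncomputable def interT (J : ℕ → ℕ → Fin 2 → ℝ) : ℕ → ℕ → Fin 2 → ℝ :=
  fun x q₁ l₂ =>
    if l₂ = (1 : Fin 2) then J x q₁ 1
    else
      match x, q₁ with
      | 0, 0 => J 0 0 0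
      | x' + 1, q' => min (J (x' + 1) q' 0) (J x' q' 1)
      | 0, q' + 1 => min (J 0 (q' + 1) 0) (J 0 q' 1)

theorem stmt_9 (J : ℕ → ℕ → Fin 2 → ℝ) (hJ : InClassF J) :
    ∀ (x q₁ : ℕ) (l₂ : Fin 2), interT J x (q₁ + 1) l₂ ≤ interT J (x + 1) q₁ l₂ := by
  intro x q₁ l₂
  fin_cases l₂
  · cases x with
    | zero =>
      show min (J 0 (q₁+1) 0) (J 0 q₁ 1) ≤ min (J 1 q₁ 0) (J 0 q₁ 1)
      exact min_le_min (hJ.F4 0 q₁ 0) le_rfl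
    | succ x' =>
      show min (J (x'+1) (q₁+1) 0) (J x' (q₁+1) 1) ≤ min (J (x'+2) q₁ 0) (J (x'+1) q₁ 1)
      exact min_le_min (hJ.F4 (x'+1) q₁ 0) (hJ.F4 x' q₁ 1)
  · simpa [interT] using hJ.F4 x q₁ 1
end

section
/- Let J : ℕ × ℕ × {0,1} → ℝ be a nonnegative function belonging to the class ℱ, and let T be the intermediate-value function obtained from J. Then T satisfies the supermodularity property (F5): for all x, q₁ ∈ ℕ, T(x,q₁,1) + T(x+1,q₁,0) ≤ T(x,q₁,0) + T(x+1,q₁,1). -/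
theorem stmt_10 (J : ℕ → ℕ → Fin 2 → ℝ) (hJ : InClassF J) :
    ∀ x q₁ : ℕ,
      interT J x q₁ 1 + interT J (x + 1) q₁ 0
        ≤ interT J x q₁ 0 + interT J (x + 1) q₁ 1 := by
  intro x q₁
  rcases x with _ | x
  · rcases q₁ with _ | q
    · simp only [interT, if_pos rfl, if_neg (by decide : (0:Fin 2) ≠ 1), if_true]
      have h5 := hJ.F5 0 0
      have hm : min (J 1 0 0) (J 0 0 1) ≤ J 1 0 0 := min_le_left _ _
      linarith
    · simp only [interT, if_pos rfl, if_neg (by decide : (0:Fin 2) ≠ 1), if_true]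
      have h5 := hJ.F5 0 (q+1)
      have h2 := hJ.F2 0 q
      have h4 := hJ.F4 0 q 0
      rw [← min_add_add_right]
      apply le_min
      · have hm : min (J 1 (q+1) 0) (J 0 (q+1) 1) ≤ J 1 (q+1) 0 := min_le_left _ _
        linarith
      · have hm : min (J 1 (q+1) 0) (J 0 (q+1) 1) ≤ J 0 (q+1) 1 := min_le_right _ _
        linarith
  · simp only [interT, if_pos rfl, if_neg (by decide : (0:Fin 2) ≠ 1), if_true]
    have h5 := hJ.F5 (x+1) q₁
    have h1 := hJ.F1 x q₁
    rw [← min_add_add_right]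
    apply le_min
    · have hm : min (J (x+2) q₁ 0) (J (x+1) q₁ 1) ≤ J (x+2) q₁ 0 := min_le_left _ _
      linarith
    · have hm : min (J (x+2) q₁ 0) (J (x+1) q₁ 1) ≤ J (x+1) q₁ 1 := min_le_right _ _
      linarith
end

section
/- Let J : ℕ × ℕ × {0,1} → ℝ be a nonnegative function belonging to the class ℱ, and let T be the intermediate-value function obtained from J. Then T satisfies the supermodularity property (F6): for all x, q₁ ∈ ℕ, T(x,q₁,1) + T(x,q₁+1,0) ≤ T(x,q₁,0) + T(x,q₁+1,1). -/
theorem stmt_11 (J : ℕ → ℕ → Fin 2 → ℝ) (hJ : InClassF J) :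
    ∀ x q₁ : ℕ,
      interT J x q₁ 1 + interT J x (q₁ + 1) 0
        ≤ interT J x q₁ 0 + interT J x (q₁ + 1) 1 := by

  intro x q₁
  rcases x with _ | x'
  · rcases q₁ with _ | q'
    · simp only [interT]
      norm_num
      have h1 := hJ.F6 0 0
      have h2 : min (J 0 1 0) (J 0 0 1) ≤ J 0 1 0 := min_le_left _ _
      linarith
    · simp only [interT]
      norm_num
      simp only [show q' + 1 + 1 = q' + 2 from rfl]
      rw [← min_add_add_right]
      apply le_min
      · have h1 := hJ.F6 0 (q' + 1)
        have h2 : min (J 0 (q' + 2) 0) (J 0 (q' + 1) 1) ≤ J 0 (q' + 2) 0 :=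
          min_le_left _ _
        linarith
      · have h1 := hJ.F3 q'
        have h2 := hJ.F6 0 (q' + 1)
        have h3 : min (J 0 (q' + 2) 0) (J 0 (q' + 1) 1) ≤ J 0 (q' + 1) 1 :=
          min_le_right _ _
        linarith
  · simp only [interT]
    norm_num
    rw [← min_add_add_right]
    apply le_min
    · have h1 := hJ.F6 (x' + 1) q₁
      have h2 : min (J (x' + 1) (q₁ + 1) 0) (J x' (q₁ + 1) 1) ≤ J (x' + 1) (q₁ + 1) 0 :=
        min_le_left _ _
      linarith
    · have h1 := hJ.F2 x' q₁
      have h2 := hJ.F6 (x' + 1) q₁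
      have h3 : min (J (x' + 1) (q₁ + 1) 0) (J x' (q₁ + 1) 1) ≤ J x' (q₁ + 1) 1 :=
        min_le_right _ _
      linarith
end

section
/- Let J : ℕ × ℕ × {0,1} → ℝ be a nonnegative function belonging to the class ℱ, and let T be the intermediate-value function obtained from J. Then T satisfies the monotonicity properties (F7)–(F9): for all x, q₁ ∈ ℕ and l₂ ∈ {0,1}, T(x,q₁,l₂) ≤ T(x+1,q₁,l₂), T(x,q₁,l₂) ≤ T(x,q₁+1,l₂), and T(x,q₁,0) ≤ T(x,q₁,1). -/
theorem stmt_12 (J : ℕ → ℕ → Fin 2 → ℝ) (hJ : InClassF J) :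
    (∀ (x q₁ : ℕ) (l₂ : Fin 2), interT J x q₁ l₂ ≤ interT J (x + 1) q₁ l₂) ∧
    (∀ (x q₁ : ℕ) (l₂ : Fin 2), interT J x q₁ l₂ ≤ interT J x (q₁ + 1) l₂) ∧
    (∀ x q₁ : ℕ, interT J x q₁ 0 ≤ interT J x q₁ 1) := by
  refine ⟨?_, ?_, ?_⟩
  · intro x q₁ l₂
    fin_cases l₂
    · match x, q₁ with
      | 0, 0 =>
        simp only [interT]
        norm_num
        exact ⟨hJ.F7 0 0 0, hJ.F9 0 0⟩
      | 0, q' + 1 =>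
        simp only [interT]
        norm_num
        exact ⟨Or.inl (hJ.F7 0 (q'+1) 0), Or.inr (hJ.F8 0 q' 1)⟩
      | x' + 1, q' =>
        simp only [interT]
        norm_num
        exact ⟨Or.inl (hJ.F7 (x'+1) q' 0), Or.inr (hJ.F7 x' q' 1)⟩
    · simp only [interT]
      norm_num
      exact hJ.F7 x q₁ 1
  · intro x q₁ l₂
    fin_cases l₂
    · match x, q₁ with
      | 0, 0 =>
        simp only [interT]
        norm_num
        exact ⟨hJ.F8 0 0 0, hJ.F9 0 0⟩
      | 0, q' + 1 =>
        simp only [interT]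
        norm_num
        exact ⟨Or.inl (hJ.F8 0 (q'+1) 0), Or.inr (hJ.F8 0 q' 1)⟩
      | x' + 1, q' =>
        simp only [interT]
        norm_num
        exact ⟨Or.inl (hJ.F8 (x'+1) q' 0), Or.inr (hJ.F8 x' q' 1)⟩
    · simp only [interT]
      norm_num
      exact hJ.F8 x q₁ 1
  · intro x q₁
    match x, q₁ with
    | 0, 0 =>
      simp only [interT]
      norm_num
      exact hJ.F9 0 0
    | 0, q' + 1 =>
      simp only [interT]
      norm_num
      exact Or.inl (hJ.F9 0 (q'+1))
    | x' + 1, q' =>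
      simp only [interT]
      norm_num
      exact Or.inl (hJ.F9 (x'+1) q')
end

section
/- Let J : ℕ × ℕ × {0,1} → ℝ be a nonnegative function belonging to the class ℱ, and let T be the intermediate-value function obtained from J. Then T also belongs to the class ℱ, i.e., T satisfies all nine properties (F1)–(F9). -/
lemma interT_one (J : ℕ → ℕ → Fin 2 → ℝ) (x q : ℕ) : interT J x q 1 = J x q 1 := by
  simp [interT]

lemma interT_00 (J : ℕ → ℕ → Fin 2 → ℝ) : interT J 0 0 0 = J 0 0 0 := by
  simp [interT]

lemma interT_succx (J : ℕ → ℕ → Fin 2 → ℝ) (x q : ℕ) :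
    interT J (x+1) q 0 = min (J (x+1) q 0) (J x q 1) := by
  simp [interT]

lemma interT_succq (J : ℕ → ℕ → Fin 2 → ℝ) (q : ℕ) :
    interT J 0 (q+1) 0 = min (J 0 (q+1) 0) (J 0 q 1) := by
  simp [interT]

/-- x-concavity of `J · q 1`, from (F1) and (F5). -/
lemma concx (J : ℕ → ℕ → Fin 2 → ℝ) (hJ : InClassF J) (x q : ℕ) :
    2 * J (x+1) q 1 ≤ J x q 1 + J (x+2) q 1 := by
  have h1 := hJ.F1 x q
  have h2 := hJ.F5 (x+1) q
  linarith

/-- q-concavity of `J 0 · 1`, from (F3) and (F6). -/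
lemma concq (J : ℕ → ℕ → Fin 2 → ℝ) (hJ : InClassF J) (q : ℕ) :
    2 * J 0 (q+1) 1 ≤ J 0 q 1 + J 0 (q+2) 1 := by
  have h1 := hJ.F3 q
  have h2 := hJ.F6 0 (q+1)
  linarith

/-- cross submodularity of `J · · 1`, from (F2) and (F6). -/
lemma crossB (J : ℕ → ℕ → Fin 2 → ℝ) (hJ : InClassF J) (x q : ℕ) :
    J (x+1) q 1 + J x (q+1) 1 ≤ J x q 1 + J (x+1) (q+1) 1 := by
  have h1 := hJ.F2 x q
  have h2 := hJ.F6 (x+1) q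
  linarith

theorem stmt_13 (J : ℕ → ℕ → Fin 2 → ℝ) (hJ : InClassF J) :
    InClassF (interT J) := by
  constructor
  · -- nonneg
    intro x q l
    fin_cases l <;> simp only [Fin.zero_eta, Fin.mk_one]
    · match x, q with
      | 0, 0 => rw [interT_00]; exact hJ.nonneg 0 0 0
      | x+1, q => rw [interT_succx]; exact le_min (hJ.nonneg _ _ _) (hJ.nonneg _ _ _)
      | 0, q+1 => rw [interT_succq]; exact le_min (hJ.nonneg _ _ _) (hJ.nonneg _ _ _)
    · rw [interT_one]; exact hJ.nonneg x q 1
  · -- F1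
    intro x q
    rw [interT_one, interT_one, interT_succx, interT_succx]
    rw [← min_add_add_left]
    refine le_min ?_ ?_
    · have h := min_le_left (J (x+1) q 0) (J x q 1)
      have h1 := hJ.F1 x q
      linarith
    · have h := min_le_right (J (x+1) q 0) (J x q 1)
      linarith
  · -- F2
    intro x q
    rw [interT_one, interT_one, interT_succx, interT_succx]
    rw [← min_add_add_left]
    refine le_min ?_ ?_
    · have h := min_le_left (J (x+1) q 0) (J x q 1)
      have h1 := hJ.F2 x q
      linarith
    · have h := min_le_right (J (x+1) q 0) (J x q 1)
      linarith
  · -- F3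
    intro q
    rw [interT_one, interT_one, interT_succq, interT_succq]
    rw [← min_add_add_left]
    refine le_min ?_ ?_
    · have h := min_le_left (J 0 (q+1) 0) (J 0 q 1)
      have h1 := hJ.F3 q
      linarith
    · have h := min_le_right (J 0 (q+1) 0) (J 0 q 1)
      linarith
  · -- F4
    intro x q l
    fin_cases l <;> simp only [Fin.zero_eta, Fin.mk_one]
    · match x with
      | 0 =>
        rw [interT_succq, interT_succx]
        exact le_min (le_trans (min_le_left _ _) (hJ.F4 0 q 0)) (min_le_right _ _)
      | x+1 =>
        rw [interT_succx, interT_succx]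
        exact le_min (le_trans (min_le_left _ _) (hJ.F4 (x+1) q 0))
          (le_trans (min_le_right _ _) (hJ.F4 x q 1))
    · rw [interT_one, interT_one]; exact hJ.F4 x q 1
  · -- F5
    intro x q
    rw [interT_one, interT_one, interT_succx]
    match x, q with
    | 0, 0 =>
      rw [interT_00]
      have h := min_le_left (J 1 0 0) (J 0 0 1)
      have h1 := hJ.F5 0 0
      linarith
    | 0, q+1 =>
      rw [interT_succq, ← min_add_add_right]
      refine le_min ?_ ?_
      · have h := min_le_left (J 1 (q+1) 0) (J 0 (q+1) 1)
        have h1 := hJ.F5 0 (q+1)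
        linarith
      · have h := min_le_right (J 1 (q+1) 0) (J 0 (q+1) 1)
        have h1 := crossB J hJ 0 q
        have h2 := hJ.F4 0 q 1
        linarith
    | x+1, q =>
      rw [interT_succx, ← min_add_add_right]
      refine le_min ?_ ?_
      · have h := min_le_left (J (x+2) q 0) (J (x+1) q 1)
        have h1 := hJ.F5 (x+1) q
        linarith
      · have h := min_le_right (J (x+2) q 0) (J (x+1) q 1)
        have h1 := concx J hJ x q
        linarith
  · -- F6
    intro x q
    rw [interT_one, interT_one]
    match x, q with
    | 0, 0 =>
      rw [interT_00, interT_succq]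
      have h := min_le_left (J 0 1 0) (J 0 0 1)
      have h1 := hJ.F6 0 0
      linarith
    | 0, q+1 =>
      rw [interT_succq, interT_succq, ← min_add_add_right]
      refine le_min ?_ ?_
      · have h := min_le_left (J 0 (q+2) 0) (J 0 (q+1) 1)
        have h1 := hJ.F6 0 (q+1)
        linarith
      · have h := min_le_right (J 0 (q+2) 0) (J 0 (q+1) 1)
        have h1 := concq J hJ q
        linarith
    | x+1, q =>
      rw [interT_succx, interT_succx, ← min_add_add_right]
      refine le_min ?_ ?_
      · have h := min_le_left (J (x+1) (q+1) 0) (J x (q+1) 1)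
        have h1 := hJ.F6 (x+1) q
        linarith
      · have h := min_le_right (J (x+1) (q+1) 0) (J x (q+1) 1)
        have h1 := crossB J hJ x q
        linarith
  · -- F7
    intro x q l
    fin_cases l <;> simp only [Fin.zero_eta, Fin.mk_one]
    · match x, q with
      | 0, 0 =>
        rw [interT_00, interT_succx]
        exact le_min (hJ.F7 0 0 0) (hJ.F9 0 0)
      | 0, q+1 =>
        rw [interT_succq, interT_succx]
        exact le_min (le_trans (min_le_left _ _) (hJ.F7 0 (q+1) 0))
          (le_trans (min_le_right _ _) (hJ.F8 0 q 1))
      | x+1, q =>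
        rw [interT_succx, interT_succx]
        exact le_min (le_trans (min_le_left _ _) (hJ.F7 (x+1) q 0))
          (le_trans (min_le_right _ _) (hJ.F7 x q 1))
    · rw [interT_one, interT_one]; exact hJ.F7 x q 1
  · -- F8
    intro x q l
    fin_cases l <;> simp only [Fin.zero_eta, Fin.mk_one]
    · match x, q with
      | 0, 0 =>
        rw [interT_00, interT_succq]
        exact le_min (hJ.F8 0 0 0) (hJ.F9 0 0)
      | 0, q+1 =>
        rw [interT_succq, interT_succq]
        exact le_min (le_trans (min_le_left _ _) (hJ.F8 0 (q+1) 0))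
          (le_trans (min_le_right _ _) (hJ.F8 0 q 1))
      | x+1, q =>
        rw [interT_succx, interT_succx]
        exact le_min (le_trans (min_le_left _ _) (hJ.F8 (x+1) q 0))
          (le_trans (min_le_right _ _) (hJ.F8 x q 1))
    · rw [interT_one, interT_one]; exact hJ.F8 x q 1
  · -- F9
    intro x q
    rw [interT_one]
    match x, q with
    | 0, 0 => rw [interT_00]; exact hJ.F9 0 0
    | 0, q+1 => rw [interT_succq]; exact le_trans (min_le_left _ _) (hJ.F9 0 (q+1))
    | x+1, q => rw [interT_succx]; exact le_trans (min_le_left _ _) (hJ.F9 (x+1) q)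
end

section
/- (Threshold structure along each line, from Lemma 2 of the paper.) Let f : ℕ × ℕ × {0,1} → ℝ be a nonnegative function belonging to the class ℱ. Then for every fixed q₁ ∈ ℕ, the set {x ∈ ℕ : f(x,q₁,1) ≤ f(x+1,q₁,0)} is upward closed; equivalently, there exists a threshold m ∈ ℕ ∪ {∞} such that adding a packet to the sub-6 GHz server is no more costly than not adding one (f(x,q₁,1) ≤ f(x+1,q₁,0)) precisely when x ≥ m. -/
theorem stmt_18 (f : ℕ → ℕ → Fin 2 → ℝ) (hf : InClassF f) :
    ∀ q₁ x y : ℕ, x ≤ y → f x q₁ 1 ≤ f (x + 1) q₁ 0 → f y q₁ 1 ≤ f (y + 1) q₁ 0 := by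
  intro q₁ x y hxy h
  induction y with
  | zero =>
    have : x = 0 := Nat.le_zero.mp hxy
    subst this; exact h
  | succ n ih =>
    rcases Nat.lt_or_ge x (n + 1) with hlt | hge
    · have hn := ih (Nat.lt_succ_iff.mp hlt)
      have h1 := hf.F1 n q₁
      linarith
    · have : x = n + 1 := le_antisymm hxy hge
      subst this; exact h
end
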